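/- Let G be a Lie group with a left-invariant metric and ξ a left-invariant unit vector field with tr(ad_ξ) = h. If h/p is not the real part of any eigenvalue of Λ^k ad_ξ^⊤ on Λ^k ξ^⊥, then the splitting of Λ^k ξ^⊥ into the sum of characteristic subspaces with eigenvalue real parts w satisfying h − pw > 0 (resp. < 0) gives, for some η > 0 and constant C, the estimate |(φ_t)^* ω|^p ≤ C e^{−ηt} Jac(φ_t) |ω|^p for all t ≥ 0 and ω in the plus subspace (and analogously for t ≤ 0 on the minus subspace); i.e., ξ is (k,p)-Anosov. -/

import Mathlib

open Polynomial
set_option synthInstance.maxHeartbeats 400000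
set_option maxHeartbeats 1600000
set_option linter.unusedSectionVars false

set_option linter.unusedTactic false
set_option linter.unreachableTactic false
set_option linter.unnecessarySeqFocus false

namespace Stmt16Aux

variable {V : Type*} [NormedAddCommGroup V] [NormedSpace ℝ V] [FiniteDimensional ℝ V]

noncomputable def E (f : V →L[ℝ] V) (t : ℝ) : V →L[ℝ] V := NormedSpace.exp (t • f)

lemma E_comm (f : V →L[ℝ] V) (t : ℝ) (x : V) : E f t (f x) = f (E f t x) := by
  have h : Commute f (NormedSpace.exp (t • f)) :=
    Commute.exp_right ((Commute.refl f).smul_right t)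
  have := congrArg (fun g : V →L[ℝ] V => g x) h.eq
  simpa [E, ContinuousLinearMap.mul_apply] using this.symm

lemma hasDerivAt_E_apply (f : V →L[ℝ] V) (x : V) (t : ℝ) :
    HasDerivAt (fun u : ℝ => E f u x) (E f t (f x)) t := by
  have h1 := hasDerivAt_exp_smul_const (𝕂 := ℝ) f t
  have h2 := h1.clm_apply (hasDerivAt_const t x)
  simpa [E, ContinuousLinearMap.mul_apply, E_comm] using h2

lemma E_zero_apply (f : V →L[ℝ] V) (x : V) : E f 0 x = x := by
  simp [E, NormedSpace.exp_zero]

lemma step_real (f : V →L[ℝ] V) {μ₀ lam CC : ℝ} (hlam : lam ≤ μ₀) (hCC : 0 ≤ CC)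
    {m n : ℕ} (hmn : m + 1 ≤ n) (x : V)
    (hbd : ∀ t : ℝ, 0 ≤ t → ‖E f t (f x - lam • x)‖ ≤
      CC * (1+t)^m * Real.exp (μ₀*t) * ‖f x - lam • x‖) :
    ∀ t : ℝ, 0 ≤ t → ‖E f t x‖ ≤
      (1 + CC * (‖f‖ + |lam|)) * (1+t)^n * Real.exp (μ₀*t) * ‖x‖ := by
  intro t ht
  set y := f x - lam • x with hy
  set F : ℝ → V := fun u => Real.exp (-(lam*u)) • E f u x with hFdef
  have hderiv : ∀ u : ℝ, HasDerivAt F (Real.exp (-(lam*u)) • E f u y) u := by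
    intro u
    have h2i : HasDerivAt (fun u : ℝ => -(lam*u)) (-lam) u := by
      simpa [mul_comm] using ((hasDerivAt_id u).const_mul (-lam))
    have h1 : HasDerivAt (fun u : ℝ => Real.exp (-(lam*u)))
        (Real.exp (-(lam*u)) * (-lam)) u :=
      h2i.exp
    have h3 := h1.smul (hasDerivAt_E_apply f x u)
    refine h3.congr_deriv ?_
    have : E f u y = E f u (f x) - lam • E f u x := by
      rw [hy, map_sub, map_smul]
    rw [this]
    module
  have hKnn : 0 ≤ CC * (1+t)^m * Real.exp ((μ₀-lam)*t) * ‖y‖ := by positivity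
  have hbound : ∀ u ∈ Set.Icc (0:ℝ) t, ‖Real.exp (-(lam*u)) • E f u y‖ ≤
      CC * (1+t)^m * Real.exp ((μ₀-lam)*t) * ‖y‖ := by
    intro u hu
    obtain ⟨hu0, hut⟩ := hu
    rw [norm_smul, Real.norm_eq_abs, abs_of_pos (Real.exp_pos _)]
    calc Real.exp (-(lam*u)) * ‖E f u y‖
        ≤ Real.exp (-(lam*u)) * (CC * (1+u)^m * Real.exp (μ₀*u) * ‖y‖) := by
          have := hbd u hu0; gcongr
      _ = CC * (1+u)^m * Real.exp ((μ₀-lam)*u) * ‖y‖ := by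
          rw [show (μ₀-lam)*u = -(lam*u) + μ₀*u by ring, Real.exp_add]; ring
      _ ≤ CC * (1+t)^m * Real.exp ((μ₀-lam)*t) * ‖y‖ := by
          have e2 : Real.exp ((μ₀-lam)*u) ≤ Real.exp ((μ₀-lam)*t) :=
            Real.exp_le_exp.2 (by nlinarith)
          gcongr
          all_goals first | linarith | exact e2
  have hmvt := (convex_Icc (0:ℝ) t).norm_image_sub_le_of_norm_hasDerivWithin_le
      (fun u _ => (hderiv u).hasDerivWithinAt) hbound
      (Set.left_mem_Icc.2 ht) (Set.right_mem_Icc.2 ht)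
  have hF0 : F 0 = x := by simp [hFdef, E_zero_apply]
  have hFt : ‖F t‖ ≤ ‖x‖ + CC * (1+t)^m * Real.exp ((μ₀-lam)*t) * ‖y‖ * t := by
    have h4 : ‖F t‖ - ‖x‖ ≤ ‖F t - F 0‖ := by
      rw [hF0]; exact norm_sub_norm_le _ _
    have h5 : ‖F t - F 0‖ ≤ CC * (1+t)^m * Real.exp ((μ₀-lam)*t) * ‖y‖ * ‖t - 0‖ := hmvt
    rw [sub_zero, Real.norm_eq_abs, abs_of_nonneg ht] at h5
    linarith
  have hFtnorm : ‖F t‖ = Real.exp (-(lam*t)) * ‖E f t x‖ := by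
    rw [hFdef]
    simp [norm_smul, abs_of_pos (Real.exp_pos _)]
  have hEt : ‖E f t x‖ = Real.exp (lam*t) * ‖F t‖ := by
    rw [hFtnorm, ← mul_assoc, ← Real.exp_add]
    simp
  have hyx : ‖y‖ ≤ (‖f‖ + |lam|) * ‖x‖ := by
    calc ‖y‖ ≤ ‖f x‖ + ‖lam • x‖ := norm_sub_le _ _
      _ ≤ ‖f‖ * ‖x‖ + |lam| * ‖x‖ := by
          rw [norm_smul, Real.norm_eq_abs]
          gcongr
          exact f.le_opNorm x
      _ = (‖f‖ + |lam|) * ‖x‖ := by ring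
  have hpow1 : (1:ℝ) ≤ (1+t)^n := one_le_pow₀ (by linarith)
  have hpowt : t * (1+t)^m ≤ (1+t)^n := by
    calc t * (1+t)^m ≤ (1+t) * (1+t)^m := by gcongr; linarith
      _ = (1+t)^(m+1) := (pow_succ' _ _).symm
      _ ≤ (1+t)^n := by gcongr; linarith
  have hexp : Real.exp (lam*t) ≤ Real.exp (μ₀*t) := Real.exp_le_exp.2 (by nlinarith)
  calc ‖E f t x‖ = Real.exp (lam*t) * ‖F t‖ := hEt
    _ ≤ Real.exp (lam*t) * (‖x‖ + CC * (1+t)^m * Real.exp ((μ₀-lam)*t) * ‖y‖ * t) :=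
        mul_le_mul_of_nonneg_left hFt (Real.exp_pos _).le
    _ = Real.exp (lam*t) * ‖x‖ +
        CC * (t * (1+t)^m) * (Real.exp (lam*t) * Real.exp ((μ₀-lam)*t)) * ‖y‖ := by ring
    _ = Real.exp (lam*t) * ‖x‖ + CC * (t * (1+t)^m) * Real.exp (μ₀*t) * ‖y‖ := by
        rw [← Real.exp_add]; ring_nf
    _ ≤ Real.exp (μ₀*t) * ((1+t)^n * ‖x‖) +
        CC * ((1+t)^n) * Real.exp (μ₀*t) * ((‖f‖ + |lam|) * ‖x‖) := by
        have t1a : Real.exp (lam*t) * ‖x‖ ≤ Real.exp (μ₀*t) * ‖x‖ :=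
          mul_le_mul_of_nonneg_right hexp (norm_nonneg x)
        have t1b : Real.exp (μ₀*t) * ‖x‖ ≤ Real.exp (μ₀*t) * ((1+t)^n * ‖x‖) := by
          have := mul_le_mul_of_nonneg_right hpow1 (norm_nonneg x)
          rw [one_mul] at this
          exact mul_le_mul_of_nonneg_left this (Real.exp_pos _).le
        have t1 : Real.exp (lam*t) * ‖x‖ ≤ Real.exp (μ₀*t) * ((1+t)^n * ‖x‖) :=
          t1a.trans t1b
        have t2 : CC * (t * (1+t)^m) * Real.exp (μ₀*t) * ‖y‖ ≤
            CC * ((1+t)^n) * Real.exp (μ₀*t) * ((‖f‖ + |lam|) * ‖x‖) := by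
          have hynn : (0:ℝ) ≤ ‖y‖ := norm_nonneg _
          have h1 : CC * (t * (1+t)^m) * Real.exp (μ₀*t) * ‖y‖ ≤
              CC * ((1+t)^n) * Real.exp (μ₀*t) * ‖y‖ := by gcongr
          have h2 : CC * ((1+t)^n) * Real.exp (μ₀*t) * ‖y‖ ≤
              CC * ((1+t)^n) * Real.exp (μ₀*t) * ((‖f‖ + |lam|) * ‖x‖) :=
            mul_le_mul_of_nonneg_left hyx (by positivity)
          linarith
        linarith
    _ = (1 + CC * (‖f‖ + |lam|)) * (1+t)^n * Real.exp (μ₀*t) * ‖x‖ := by ring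

lemma step_quad (f : V →L[ℝ] V) {μ₀ a b CC : ℝ} (ha : a ≤ μ₀) (hb : b ≠ 0) (hCC : 0 ≤ CC)
    {m n : ℕ} (hmn : m + 1 ≤ n) (x : V)
    (hbd : ∀ t : ℝ, 0 ≤ t → ‖E f t (f (f x) - (2*a) • f x + (a*a+b*b) • x)‖ ≤
      CC * (1+t)^m * Real.exp (μ₀*t) * ‖f (f x) - (2*a) • f x + (a*a+b*b) • x‖) :
    ∀ t : ℝ, 0 ≤ t → ‖E f t x‖ ≤
      ((1 + |b|⁻¹*(‖f‖+|a|)) + 2*CC* |b|⁻¹*(‖f‖*‖f‖ + |2*a| *‖f‖ + |a*a+b*b|))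
        * (1+t)^n * Real.exp (μ₀*t) * ‖x‖ := by
  intro t ht
  set y := f (f x) - (2*a) • f x + (a*a+b*b) • x with hy
  set w := b⁻¹ • (f x - a • x) with hw
  have hbw : b • w = f x - a • x := by
    rw [hw, smul_smul, mul_inv_cancel₀ hb, one_smul]
  have hfw : f w = a • w + (b⁻¹ • y - b • x) := by
    rw [hw, map_smul, map_sub, map_smul, hy]
    match_scalars <;> field_simp <;> ring
  set Xf : ℝ → V := fun u => Real.exp (-(a*u)) • E f u x with hXf
  set Yf : ℝ → V := fun u => Real.exp (-(a*u)) • E f u w with hYf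
  have hexpd : ∀ u : ℝ, HasDerivAt (fun u : ℝ => Real.exp (-(a*u)))
      (Real.exp (-(a*u)) * (-a)) u := fun u =>
    HasDerivAt.exp
      (by simpa [mul_comm] using ((hasDerivAt_id u).const_mul (-a)) : HasDerivAt (fun u : ℝ => -(a*u)) (-a) u)
  have hX : ∀ u : ℝ, HasDerivAt Xf (b • Yf u) u := by
    intro u
    have h3 := (hexpd u).smul (hasDerivAt_E_apply f x u)
    refine h3.congr_deriv ?_
    have h4 : b • Yf u = Real.exp (-(a*u)) • E f u (f x - a • x) := by
      rw [hYf]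
      simp only [← hbw, map_smul]
      module
    rw [h4, map_sub, map_smul]
    module
  have hY : ∀ u : ℝ, HasDerivAt Yf
      (b⁻¹ • (Real.exp (-(a*u)) • E f u y) - b • Xf u) u := by
    intro u
    have h3 := (hexpd u).smul (hasDerivAt_E_apply f w u)
    rw [hYf]
    simp only [hXf]
    refine h3.congr_deriv ?_
    rw [hfw]
    simp only [map_add, map_sub, map_smul]
    module
  set F : ℝ → V := fun u => Real.cos (b*u) • Xf u - Real.sin (b*u) • Yf u with hF
  set G : ℝ → V := fun u => Real.sin (b*u) • Xf u + Real.cos (b*u) • Yf u with hG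
  have hbu : ∀ u : ℝ, HasDerivAt (fun u : ℝ => b*u) b u := fun u => by
    simpa using ((hasDerivAt_id u).const_mul b)
  have hcos : ∀ u : ℝ, HasDerivAt (fun u : ℝ => Real.cos (b*u))
      (-Real.sin (b*u) * b) u := fun u => (Real.hasDerivAt_cos (b*u)).comp u (hbu u)
  have hsin : ∀ u : ℝ, HasDerivAt (fun u : ℝ => Real.sin (b*u))
      (Real.cos (b*u) * b) u := fun u => (Real.hasDerivAt_sin (b*u)).comp u (hbu u)
  have hFd : ∀ u : ℝ, HasDerivAt F
      ((-(Real.sin (b*u)) * b⁻¹) • (Real.exp (-(a*u)) • E f u y)) u := by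
    intro u
    have h3 := ((hcos u).smul (hX u)).sub ((hsin u).smul (hY u))
    refine h3.congr_deriv ?_
    module
  have hGd : ∀ u : ℝ, HasDerivAt G
      ((Real.cos (b*u) * b⁻¹) • (Real.exp (-(a*u)) • E f u y)) u := by
    intro u
    have h3 := ((hsin u).smul (hX u)).add ((hcos u).smul (hY u))
    refine h3.congr_deriv ?_
    module
  -- common bound for the forcing term
  set K : ℝ := CC * (1+t)^m * Real.exp ((μ₀-a)*t) * ‖y‖ with hK
  have hKnn : 0 ≤ K := by rw [hK]; positivity
  have hforce : ∀ u ∈ Set.Icc (0:ℝ) t, ‖Real.exp (-(a*u)) • E f u y‖ ≤ K := by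
    intro u hu
    obtain ⟨hu0, hut⟩ := hu
    rw [norm_smul, Real.norm_eq_abs, abs_of_pos (Real.exp_pos _)]
    calc Real.exp (-(a*u)) * ‖E f u y‖
        ≤ Real.exp (-(a*u)) * (CC * (1+u)^m * Real.exp (μ₀*u) * ‖y‖) := by
          have := hbd u hu0; gcongr
      _ = CC * (1+u)^m * Real.exp ((μ₀-a)*u) * ‖y‖ := by
          rw [show (μ₀-a)*u = -(a*u) + μ₀*u by ring, Real.exp_add]; ring
      _ ≤ K := by
          rw [hK]
          have e2 : Real.exp ((μ₀-a)*u) ≤ Real.exp ((μ₀-a)*t) :=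
            Real.exp_le_exp.2 (by nlinarith)
          gcongr
          all_goals first | linarith | exact e2
  have hFbound : ∀ u ∈ Set.Icc (0:ℝ) t,
      ‖(-(Real.sin (b*u)) * b⁻¹) • (Real.exp (-(a*u)) • E f u y)‖ ≤ |b|⁻¹ * K := by
    intro u hu
    rw [norm_smul, Real.norm_eq_abs]
    have h1 : |(-(Real.sin (b*u)) * b⁻¹)| ≤ |b|⁻¹ := by
      rw [abs_mul, abs_neg, abs_inv]
      have := Real.abs_sin_le_one (b*u)
      have hbpos : 0 < |b|⁻¹ := by positivity
      nlinarith [abs_nonneg (Real.sin (b*u))]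
    exact mul_le_mul h1 (hforce u hu) (norm_nonneg _) (by positivity)
  have hGbound : ∀ u ∈ Set.Icc (0:ℝ) t,
      ‖(Real.cos (b*u) * b⁻¹) • (Real.exp (-(a*u)) • E f u y)‖ ≤ |b|⁻¹ * K := by
    intro u hu
    rw [norm_smul, Real.norm_eq_abs]
    have h1 : |(Real.cos (b*u) * b⁻¹)| ≤ |b|⁻¹ := by
      rw [abs_mul, abs_inv]
      have := Real.abs_cos_le_one (b*u)
      have hbpos : 0 < |b|⁻¹ := by positivity
      nlinarith [abs_nonneg (Real.cos (b*u))]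
    exact mul_le_mul h1 (hforce u hu) (norm_nonneg _) (by positivity)
  have hmvtF := (convex_Icc (0:ℝ) t).norm_image_sub_le_of_norm_hasDerivWithin_le
      (fun u _ => (hFd u).hasDerivWithinAt) hFbound
      (Set.left_mem_Icc.2 ht) (Set.right_mem_Icc.2 ht)
  have hmvtG := (convex_Icc (0:ℝ) t).norm_image_sub_le_of_norm_hasDerivWithin_le
      (fun u _ => (hGd u).hasDerivWithinAt) hGbound
      (Set.left_mem_Icc.2 ht) (Set.right_mem_Icc.2 ht)
  have hF0 : F 0 = x := by simp [hF, hXf, hYf, E_zero_apply]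
  have hG0 : G 0 = w := by simp [hG, hXf, hYf, E_zero_apply]
  rw [hF0] at hmvtF
  rw [hG0] at hmvtG
  rw [sub_zero, Real.norm_eq_abs, abs_of_nonneg ht] at hmvtF hmvtG
  have hFt : ‖F t‖ ≤ ‖x‖ + |b|⁻¹ * K * t := by
    have := norm_sub_norm_le (F t) x
    linarith
  have hGt : ‖G t‖ ≤ ‖w‖ + |b|⁻¹ * K * t := by
    have := norm_sub_norm_le (G t) w
    linarith
  have hrecover : Xf t = Real.cos (b*t) • F t + Real.sin (b*t) • G t := by
    rw [hF, hG]
    match_scalars <;>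
      first
        | ring1
        | linear_combination (-(Real.exp (-(a*t)))) * Real.sin_sq_add_cos_sq (b*t)
        | linear_combination (-(Real.exp (-(a*t)))) * Real.sin_sq_add_cos_sq (t*b)
  have hXFG : ‖Xf t‖ ≤ ‖F t‖ + ‖G t‖ := by
    rw [hrecover]
    calc ‖Real.cos (b*t) • F t + Real.sin (b*t) • G t‖
        ≤ ‖Real.cos (b*t) • F t‖ + ‖Real.sin (b*t) • G t‖ := norm_add_le _ _
      _ ≤ ‖F t‖ + ‖G t‖ := by
          rw [norm_smul, norm_smul, Real.norm_eq_abs, Real.norm_eq_abs]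
          have h1 := Real.abs_cos_le_one (b*t)
          have h2 := Real.abs_sin_le_one (b*t)
          have := abs_nonneg (Real.cos (b*t))
          have := abs_nonneg (Real.sin (b*t))
          nlinarith [norm_nonneg (F t), norm_nonneg (G t)]
  have hEeq : ‖E f t x‖ = Real.exp (a*t) * ‖Xf t‖ := by
    have : ‖Xf t‖ = Real.exp (-(a*t)) * ‖E f t x‖ := by
      rw [hXf]; simp [norm_smul, abs_of_pos (Real.exp_pos _)]
    rw [this, ← mul_assoc, ← Real.exp_add]
    simp
  have hwx : ‖w‖ ≤ |b|⁻¹ * ((‖f‖+|a|) * ‖x‖) := by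
    rw [hw, norm_smul, Real.norm_eq_abs, abs_inv]
    gcongr
    calc ‖f x - a • x‖ ≤ ‖f x‖ + ‖a • x‖ := norm_sub_le _ _
      _ ≤ ‖f‖ * ‖x‖ + |a| * ‖x‖ := by
          rw [norm_smul, Real.norm_eq_abs]
          gcongr
          exact f.le_opNorm x
      _ = (‖f‖+|a|) * ‖x‖ := by ring
  have hyx : ‖y‖ ≤ (‖f‖*‖f‖ + |2*a| *‖f‖ + |a*a+b*b|) * ‖x‖ := by
    rw [hy]
    calc ‖f (f x) - (2*a) • f x + (a*a+b*b) • x‖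
        ≤ ‖f (f x) - (2*a) • f x‖ + ‖(a*a+b*b) • x‖ := norm_add_le _ _
      _ ≤ ‖f (f x)‖ + ‖(2*a) • f x‖ + ‖(a*a+b*b) • x‖ := by
          have := norm_sub_le (f (f x)) ((2*a) • f x)
          linarith
      _ ≤ ‖f‖*(‖f‖*‖x‖) + |2*a| *(‖f‖*‖x‖) + |a*a+b*b| *‖x‖ := by
          rw [norm_smul, norm_smul, Real.norm_eq_abs, Real.norm_eq_abs]
          have h1 : ‖f (f x)‖ ≤ ‖f‖*(‖f‖*‖x‖) := by
            calc ‖f (f x)‖ ≤ ‖f‖ * ‖f x‖ := f.le_opNorm _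
              _ ≤ ‖f‖ * (‖f‖*‖x‖) := by gcongr; exact f.le_opNorm x
          have h2 : |2*a| * ‖f x‖ ≤ |2*a| * (‖f‖*‖x‖) := by
            gcongr; exact f.le_opNorm x
          gcongr <;> first | exact f.le_opNorm x | skip
      _ = (‖f‖*‖f‖ + |2*a| *‖f‖ + |a*a+b*b|) * ‖x‖ := by ring
  have hpow1 : (1:ℝ) ≤ (1+t)^n := one_le_pow₀ (by linarith)
  have hpowt : t * (1+t)^m ≤ (1+t)^n := by
    calc t * (1+t)^m ≤ (1+t) * (1+t)^m := by gcongr; linarith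
      _ = (1+t)^(m+1) := (pow_succ' _ _).symm
      _ ≤ (1+t)^n := by gcongr; linarith
  have hexp : Real.exp (a*t) ≤ Real.exp (μ₀*t) := Real.exp_le_exp.2 (by nlinarith)
  have hbinv : (0:ℝ) ≤ |b|⁻¹ := by positivity
  calc ‖E f t x‖ = Real.exp (a*t) * ‖Xf t‖ := hEeq
    _ ≤ Real.exp (a*t) * ((‖x‖ + ‖w‖) + 2*(|b|⁻¹ * K * t)) := by
        apply mul_le_mul_of_nonneg_left _ (Real.exp_pos _).le
        calc ‖Xf t‖ ≤ ‖F t‖ + ‖G t‖ := hXFG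
          _ ≤ (‖x‖ + ‖w‖) + 2*(|b|⁻¹ * K * t) := by linarith
    _ = Real.exp (a*t) * (‖x‖ + ‖w‖) +
        2* |b|⁻¹*CC*(t*(1+t)^m)*(Real.exp (a*t)*Real.exp ((μ₀-a)*t))*‖y‖ := by
        rw [hK]; ring
    _ = Real.exp (a*t) * (‖x‖ + ‖w‖) +
        2* |b|⁻¹*CC*(t*(1+t)^m)*Real.exp (μ₀*t)*‖y‖ := by
        rw [← Real.exp_add]; ring_nf
    _ ≤ Real.exp (μ₀*t) * ((1+t)^n * ((1 + |b|⁻¹*(‖f‖+|a|))*‖x‖)) +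
        2* |b|⁻¹*CC*((1+t)^n)*Real.exp (μ₀*t)*
          ((‖f‖*‖f‖ + |2*a| *‖f‖ + |a*a+b*b|) * ‖x‖) := by
        have s1 : ‖x‖ + ‖w‖ ≤ (1 + |b|⁻¹*(‖f‖+|a|))*‖x‖ := by nlinarith [norm_nonneg x]
        have t1a : Real.exp (a*t) * (‖x‖ + ‖w‖) ≤
            Real.exp (μ₀*t) * ((1 + |b|⁻¹*(‖f‖+|a|))*‖x‖) := by
          apply mul_le_mul hexp s1 (by positivity) (Real.exp_pos _).le
        have t1b : Real.exp (μ₀*t) * ((1 + |b|⁻¹*(‖f‖+|a|))*‖x‖) ≤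
            Real.exp (μ₀*t) * ((1+t)^n * ((1 + |b|⁻¹*(‖f‖+|a|))*‖x‖)) := by
          have h5 := mul_le_mul_of_nonneg_right hpow1 (by positivity :
            (0:ℝ) ≤ (1 + |b|⁻¹*(‖f‖+|a|))*‖x‖)
          rw [one_mul] at h5
          exact mul_le_mul_of_nonneg_left h5 (Real.exp_pos _).le
        have t2 : 2* |b|⁻¹*CC*(t*(1+t)^m)*Real.exp (μ₀*t)*‖y‖ ≤
            2* |b|⁻¹*CC*((1+t)^n)*Real.exp (μ₀*t)*
              ((‖f‖*‖f‖ + |2*a| *‖f‖ + |a*a+b*b|) * ‖x‖) := by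
          have u1 : 2* |b|⁻¹*CC*(t*(1+t)^m)*Real.exp (μ₀*t)*‖y‖ ≤
              2* |b|⁻¹*CC*((1+t)^n)*Real.exp (μ₀*t)*‖y‖ := by gcongr
          have u2 : 2* |b|⁻¹*CC*((1+t)^n)*Real.exp (μ₀*t)*‖y‖ ≤
              2* |b|⁻¹*CC*((1+t)^n)*Real.exp (μ₀*t)*
                ((‖f‖*‖f‖ + |2*a| *‖f‖ + |a*a+b*b|) * ‖x‖) :=
            mul_le_mul_of_nonneg_left hyx (by positivity)
          linarith
        linarith
    _ = ((1 + |b|⁻¹*(‖f‖+|a|)) + 2*CC* |b|⁻¹*(‖f‖*‖f‖ + |2*a| *‖f‖ + |a*a+b*b|))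
          * (1+t)^n * Real.exp (μ₀*t) * ‖x‖ := by ring




lemma key (f : V →L[ℝ] V) (μ₀ : ℝ) :
    ∀ (n : ℕ) (q : ℝ[X]), q ≠ 0 → q.natDegree ≤ n →
    (∀ z : ℂ, (q.map (algebraMap ℝ ℂ)).IsRoot z → z.re ≤ μ₀) →
    ∃ C : ℝ, 0 < C ∧ ∀ x ∈ LinearMap.ker (Polynomial.aeval (f : V →ₗ[ℝ] V) q),
      ∀ t : ℝ, 0 ≤ t → ‖E f t x‖ ≤ C * (1+t)^n * Real.exp (μ₀*t) * ‖x‖ := by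
  intro n
  induction n using Nat.strong_induction_on with
  | _ n IH =>
  intro q hq0 hdeg hroots
  by_cases hq : q.natDegree = 0
  · refine ⟨1, one_pos, ?_⟩
    intro x hx t ht
    obtain ⟨c, rfl⟩ := Polynomial.natDegree_eq_zero.mp hq
    have hc : c ≠ 0 := fun h => hq0 (by simp [h])
    rw [LinearMap.mem_ker] at hx
    have hx' : c • x = 0 := by
      rw [← hx]; simp [Module.algebraMap_end_apply]
    have hx0 : x = 0 := by
      rcases smul_eq_zero.mp hx' with h | h
      · exact absurd h hc
      · exact h
    subst hx0
    simp only [map_zero, norm_zero]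
    positivity
  · have hdegpos : 0 < q.degree := Polynomial.natDegree_pos_iff_degree_pos.mp (Nat.pos_of_ne_zero hq)
    have hdegmap : 0 < (q.map (algebraMap ℝ ℂ)).degree := by
      rwa [Polynomial.degree_map]
    obtain ⟨z, hz⟩ := Complex.exists_root hdegmap
    have hn1 : 1 ≤ n := le_trans (Nat.pos_of_ne_zero hq) hdeg
    by_cases him : z.im = 0
    -- ===================== real root case =====================
    · set lam := z.re with hlam_def
      have hlam : lam ≤ μ₀ := hroots z hz
      have hzeq : z = (lam : ℂ) := by
        apply Complex.ext
        · simp [hlam_def]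
        · simp [him]
      have hroot : q.IsRoot lam := by
        have h1 := hz
        rw [hzeq] at h1
        have h2 : (q.map (algebraMap ℝ ℂ)).eval ((algebraMap ℝ ℂ) lam)
            = (algebraMap ℝ ℂ) (q.eval lam) := by
          rw [Polynomial.eval_map, Polynomial.eval₂_at_apply]
        have h3 : (algebraMap ℝ ℂ) (q.eval lam) = 0 := by
          rw [← h2]; exact h1
        show q.eval lam = 0
        exact (algebraMap ℝ ℂ).injective (h3.trans (map_zero _).symm)
      obtain ⟨s, hs⟩ := Polynomial.dvd_iff_isRoot.mpr hroot
      have hsne : s ≠ 0 := by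
        rintro rfl
        rw [mul_zero] at hs
        exact hq0 hs
      have hdq : q.natDegree = 1 + s.natDegree := by
        rw [hs, Polynomial.natDegree_mul (Polynomial.X_sub_C_ne_zero lam) hsne,
          Polynomial.natDegree_X_sub_C]
      have hsroots : ∀ w : ℂ, (s.map (algebraMap ℝ ℂ)).IsRoot w → w.re ≤ μ₀ := by
        intro w hw
        apply hroots
        rw [hs, Polynomial.map_mul]
        simp only [Polynomial.IsRoot, Polynomial.eval_mul] at hw ⊢
        rw [hw, mul_zero]
      obtain ⟨C, hCpos, hCb⟩ := IH (n-1) (by omega) s hsne (by omega) hsroots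
      refine ⟨1 + C * (‖f‖ + |lam|), by positivity, ?_⟩
      intro x hx t ht
      rw [LinearMap.mem_ker] at hx
      have h2 : (Polynomial.aeval (f : V →ₗ[ℝ] V) (X - Polynomial.C lam)) x = f x - lam • x := by
        simp [Module.algebraMap_end_apply]
      have hyker : (f x - lam • x) ∈ LinearMap.ker (Polynomial.aeval (f : V →ₗ[ℝ] V) s) := by
        rw [LinearMap.mem_ker, ← h2]
        have hs' : q = s * (X - Polynomial.C lam) := by rw [hs]; ring
        have : (Polynomial.aeval (f : V →ₗ[ℝ] V) s)
            ((Polynomial.aeval (f : V →ₗ[ℝ] V) (X - Polynomial.C lam)) x)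
            = (Polynomial.aeval (f : V →ₗ[ℝ] V) q) x := by
          rw [hs', map_mul]; rfl
        rw [this, hx]
      have hbd : ∀ u : ℝ, 0 ≤ u → ‖E f u (f x - lam • x)‖ ≤
          C * (1+u)^(n-1) * Real.exp (μ₀*u) * ‖f x - lam • x‖ :=
        fun u hu => hCb _ hyker u hu
      exact step_real f hlam hCpos.le (by omega : (n-1) + 1 ≤ n) x hbd t ht
    -- ===================== complex pair case =====================
    · set a := z.re with ha_def
      set b := z.im with hb_def
      have ha : a ≤ μ₀ := hroots z hz
      have hbne : b ≠ 0 := him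
      have hconj : (q.map (algebraMap ℝ ℂ)).IsRoot ((starRingEnd ℂ) z) := by
        have hcomp : (starRingEnd ℂ).comp (algebraMap ℝ ℂ) = algebraMap ℝ ℂ := by
          ext r
          exact Complex.conj_ofReal r
        have h1 : (starRingEnd ℂ) ((q.map (algebraMap ℝ ℂ)).eval z)
            = (q.map (algebraMap ℝ ℂ)).eval ((starRingEnd ℂ) z) := by
          rw [Polynomial.eval_map, Polynomial.eval_map, Polynomial.hom_eval₂, hcomp]
        simp only [Polynomial.IsRoot] at hz ⊢
        rw [← h1, hz, map_zero]
      set r : ℝ[X] := X*X - Polynomial.C (2*a)*X + Polynomial.C (a*a+b*b) with hr_def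
      have hmapr : r.map (algebraMap ℝ ℂ) =
          (X - Polynomial.C z) * (X - Polynomial.C ((starRingEnd ℂ) z)) := by
        have e1 : (X - Polynomial.C z) * (X - Polynomial.C ((starRingEnd ℂ) z)) =
            X*X - (Polynomial.C z + Polynomial.C ((starRingEnd ℂ) z))*X
              + Polynomial.C z * Polynomial.C ((starRingEnd ℂ) z) := by ring
        rw [e1, ← map_add, ← map_mul, Complex.add_conj, Complex.mul_conj,
          Complex.normSq_apply, hr_def]
        simp only [Polynomial.map_add, Polynomial.map_sub, Polynomial.map_mul,
          Polynomial.map_X, Polynomial.map_C, Complex.coe_algebraMap,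
          Complex.ofReal_mul, Complex.ofReal_add, Complex.ofReal_ofNat, map_mul, map_add]
        try ring
      have hzz : (starRingEnd ℂ) z ≠ z := fun h => him (Complex.conj_eq_iff_im.mp h)
      have hcop : IsCoprime (X - Polynomial.C z) (X - Polynomial.C ((starRingEnd ℂ) z)) := by
        set c : ℂ := ((starRingEnd ℂ) z - z)⁻¹ with hc_def
        refine ⟨Polynomial.C c, -(Polynomial.C c), ?_⟩
        have e2 : Polynomial.C c * (X - Polynomial.C z) +
            -(Polynomial.C c) * (X - Polynomial.C ((starRingEnd ℂ) z)) =
            Polynomial.C c * (Polynomial.C ((starRingEnd ℂ) z) - Polynomial.C z) := by ring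
        rw [e2, ← map_sub, ← map_mul, inv_mul_cancel₀ (sub_ne_zero.mpr hzz), map_one]
      have hdvd : r ∣ q := by
        rw [← Polynomial.map_dvd_map' (algebraMap ℝ ℂ), hmapr]
        exact IsCoprime.mul_dvd hcop (Polynomial.dvd_iff_isRoot.mpr hz)
          (Polynomial.dvd_iff_isRoot.mpr hconj)
      obtain ⟨s, hs⟩ := hdvd
      have hrmon : r.Monic := by
        have hrw : r = X^2 + (-(Polynomial.C (2*a)*X) + Polynomial.C (a*a+b*b)) := by
          rw [hr_def]; ring
        rw [hrw]
        apply Polynomial.monic_X_pow_add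
        apply lt_of_le_of_lt _ (show (1 : WithBot ℕ) < 2 by norm_num)
        apply le_trans (Polynomial.degree_add_le _ _)
        apply max_le
        · rw [Polynomial.degree_neg]
          apply le_trans (Polynomial.degree_mul_le _ _)
          calc (Polynomial.C (2*a)).degree + Polynomial.X.degree ≤ 0 + 1 := by
                apply add_le_add Polynomial.degree_C_le
                rw [Polynomial.degree_X]
            _ ≤ 1 := by norm_num
        · exact le_trans Polynomial.degree_C_le (by norm_num)
      have hrne : r ≠ 0 := hrmon.ne_zero
      have hrdeg : r.natDegree = 2 := by
        have hrw : r = X^2 + (-(Polynomial.C (2*a)*X) + Polynomial.C (a*a+b*b)) := by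
          rw [hr_def]; ring
        rw [hrw]
        compute_degree!
      have hsne : s ≠ 0 := by
        rintro rfl
        rw [mul_zero] at hs
        exact hq0 hs
      have hdq : q.natDegree = 2 + s.natDegree := by
        rw [hs, Polynomial.natDegree_mul hrne hsne, hrdeg]
      have hn2 : 2 ≤ n := by omega
      have hsroots : ∀ w : ℂ, (s.map (algebraMap ℝ ℂ)).IsRoot w → w.re ≤ μ₀ := by
        intro w hw
        apply hroots
        rw [hs, Polynomial.map_mul]
        simp only [Polynomial.IsRoot, Polynomial.eval_mul] at hw ⊢
        rw [hw, mul_zero]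
      obtain ⟨C, hCpos, hCb⟩ := IH (n-2) (by omega) s hsne (by omega) hsroots
      refine ⟨(1 + |b|⁻¹ * (‖f‖+|a|)) + 2*C* |b|⁻¹ * (‖f‖*‖f‖ + |2*a| * ‖f‖ + |a*a+b*b|),
        ?_, ?_⟩
      · apply add_pos_of_pos_of_nonneg (by positivity)
        apply mul_nonneg _ (by positivity)
        apply mul_nonneg _ (by positivity)
        apply mul_nonneg (by norm_num) hCpos.le
      intro x hx t ht
      rw [LinearMap.mem_ker] at hx
      have h2 : (Polynomial.aeval (f : V →ₗ[ℝ] V) r) x =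
          f (f x) - (2*a) • f x + (a*a+b*b) • x := by
        rw [hr_def]
        simp [Module.algebraMap_end_apply, Module.End.mul_apply]
        module
      have hyker : (f (f x) - (2*a) • f x + (a*a+b*b) • x) ∈
          LinearMap.ker (Polynomial.aeval (f : V →ₗ[ℝ] V) s) := by
        rw [LinearMap.mem_ker, ← h2]
        have hs' : q = s * r := by rw [hs]; ring
        have : (Polynomial.aeval (f : V →ₗ[ℝ] V) s)
            ((Polynomial.aeval (f : V →ₗ[ℝ] V) r) x)
            = (Polynomial.aeval (f : V →ₗ[ℝ] V) q) x := by
          rw [hs', map_mul]; rfl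
        rw [this, hx]
      have hbd : ∀ u : ℝ, 0 ≤ u → ‖E f u (f (f x) - (2*a) • f x + (a*a+b*b) • x)‖ ≤
          C * (1+u)^(n-2) * Real.exp (μ₀*u) * ‖f (f x) - (2*a) • f x + (a*a+b*b) • x‖ :=
        fun u hu => hCb _ hyker u hu
      exact step_quad f ha hbne hCpos.le (by omega : (n-2) + 1 ≤ n) x hbd t ht



lemma split (c : ℝ) : ∀ (n : ℕ) (q : ℝ[X]), q.Monic → q.natDegree ≤ n →
    (∀ z : ℂ, (q.map (algebraMap ℝ ℂ)).IsRoot z → z.re ≠ c) →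
    ∃ qp qm : ℝ[X], qp.Monic ∧ qm.Monic ∧ q = qp * qm ∧
      (∀ z : ℂ, (qp.map (algebraMap ℝ ℂ)).IsRoot z → z.re < c) ∧
      (∀ z : ℂ, (qm.map (algebraMap ℝ ℂ)).IsRoot z → c < z.re) := by
  intro n
  induction n using Nat.strong_induction_on with
  | _ n IH =>
  intro q hmon hdeg hroots
  by_cases hq : q.natDegree = 0
  · refine ⟨1, 1, monic_one, monic_one, ?_, ?_, ?_⟩
    · rw [(hmon.natDegree_eq_zero).mp hq, one_mul]
    · intro z hz; simp [Polynomial.IsRoot] at hz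
    · intro z hz; simp [Polynomial.IsRoot] at hz
  · have hq0 : q ≠ 0 := hmon.ne_zero
    have hdegpos : 0 < q.degree := Polynomial.natDegree_pos_iff_degree_pos.mp (Nat.pos_of_ne_zero hq)
    have hdegmap : 0 < (q.map (algebraMap ℝ ℂ)).degree := by rwa [Polynomial.degree_map]
    obtain ⟨z, hz⟩ := Complex.exists_root hdegmap
    have hn1 : 1 ≤ n := le_trans (Nat.pos_of_ne_zero hq) hdeg
    by_cases him : z.im = 0
    · -- real root
      set lam := z.re with hlam_def
      have hzeq : z = (lam : ℂ) := by
        apply Complex.ext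
        · simp [hlam_def]
        · simp [him]
      have hroot : q.IsRoot lam := by
        have h1 := hz
        rw [hzeq] at h1
        have h2 : (q.map (algebraMap ℝ ℂ)).eval ((algebraMap ℝ ℂ) lam)
            = (algebraMap ℝ ℂ) (q.eval lam) := by
          rw [Polynomial.eval_map, Polynomial.eval₂_at_apply]
        have h3 : (algebraMap ℝ ℂ) (q.eval lam) = 0 := by rw [← h2]; exact h1
        show q.eval lam = 0
        exact (algebraMap ℝ ℂ).injective (h3.trans (map_zero _).symm)
      obtain ⟨s, hs⟩ := Polynomial.dvd_iff_isRoot.mpr hroot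
      have hsmon : s.Monic := (monic_X_sub_C lam).of_mul_monic_left (hs ▸ hmon)
      have hsne : s ≠ 0 := hsmon.ne_zero
      have hdq : q.natDegree = 1 + s.natDegree := by
        rw [hs, Polynomial.natDegree_mul (Polynomial.X_sub_C_ne_zero lam) hsne,
          Polynomial.natDegree_X_sub_C]
      have hsroots : ∀ w : ℂ, (s.map (algebraMap ℝ ℂ)).IsRoot w → w.re ≠ c := by
        intro w hw
        apply hroots
        rw [hs, Polynomial.map_mul]
        simp only [Polynomial.IsRoot, Polynomial.eval_mul] at hw ⊢
        rw [hw, mul_zero]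
      obtain ⟨sp, sm, hspm, hsmm, hfac, hsp, hsm⟩ :=
        IH (n-1) (by omega) s hsmon (by omega) hsroots
      have hXroot : ∀ w : ℂ, ((X - Polynomial.C lam).map (algebraMap ℝ ℂ)).IsRoot w →
          w = (lam : ℂ) := by
        intro w hw
        simp only [Polynomial.map_sub, Polynomial.map_X, Polynomial.map_C,
          Polynomial.IsRoot, Polynomial.eval_sub, Polynomial.eval_X,
          Polynomial.eval_C, sub_eq_zero] at hw
        exact_mod_cast hw
      have hlamne : lam ≠ c := by
        have := hroots z hz
        rwa [← hlam_def] at this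
      rcases lt_or_gt_of_ne hlamne with hlt | hgt
      · refine ⟨(X - Polynomial.C lam) * sp, sm, (monic_X_sub_C lam).mul hspm, hsmm, ?_, ?_, hsm⟩
        · rw [hs, hfac]; ring
        · intro w hw
          rw [Polynomial.map_mul] at hw
          simp only [Polynomial.IsRoot, Polynomial.eval_mul, mul_eq_zero] at hw
          rcases hw with hw | hw
          · have := hXroot w hw
            rw [this]
            simpa using hlt
          · exact hsp w hw
      · refine ⟨sp, (X - Polynomial.C lam) * sm, hspm, (monic_X_sub_C lam).mul hsmm, ?_, hsp, ?_⟩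
        · rw [hs, hfac]; ring
        · intro w hw
          rw [Polynomial.map_mul] at hw
          simp only [Polynomial.IsRoot, Polynomial.eval_mul, mul_eq_zero] at hw
          rcases hw with hw | hw
          · have := hXroot w hw
            rw [this]
            simpa using hgt
          · exact hsm w hw
    · -- complex conjugate pair
      set a := z.re with ha_def
      set b := z.im with hb_def
      have hconj : (q.map (algebraMap ℝ ℂ)).IsRoot ((starRingEnd ℂ) z) := by
        have hcomp : (starRingEnd ℂ).comp (algebraMap ℝ ℂ) = algebraMap ℝ ℂ := by
          ext r; exact Complex.conj_ofReal r
        have h1 : (starRingEnd ℂ) ((q.map (algebraMap ℝ ℂ)).eval z)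
            = (q.map (algebraMap ℝ ℂ)).eval ((starRingEnd ℂ) z) := by
          rw [Polynomial.eval_map, Polynomial.eval_map, Polynomial.hom_eval₂, hcomp]
        simp only [Polynomial.IsRoot] at hz ⊢
        rw [← h1, hz, map_zero]
      set r : ℝ[X] := X*X - Polynomial.C (2*a)*X + Polynomial.C (a*a+b*b) with hr_def
      have hmapr : r.map (algebraMap ℝ ℂ) =
          (X - Polynomial.C z) * (X - Polynomial.C ((starRingEnd ℂ) z)) := by
        have e1 : (X - Polynomial.C z) * (X - Polynomial.C ((starRingEnd ℂ) z)) =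
            X*X - (Polynomial.C z + Polynomial.C ((starRingEnd ℂ) z))*X
              + Polynomial.C z * Polynomial.C ((starRingEnd ℂ) z) := by ring
        rw [e1, ← map_add, ← map_mul, Complex.add_conj, Complex.mul_conj,
          Complex.normSq_apply, hr_def]
        simp only [Polynomial.map_add, Polynomial.map_sub, Polynomial.map_mul,
          Polynomial.map_X, Polynomial.map_C, Complex.coe_algebraMap,
          Complex.ofReal_mul, Complex.ofReal_add, Complex.ofReal_ofNat, map_mul, map_add]
        try ring
      have hzz : (starRingEnd ℂ) z ≠ z := fun hcc => him (Complex.conj_eq_iff_im.mp hcc)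
      have hcop : IsCoprime (X - Polynomial.C z) (X - Polynomial.C ((starRingEnd ℂ) z)) := by
        refine ⟨Polynomial.C (((starRingEnd ℂ) z - z)⁻¹),
          -(Polynomial.C (((starRingEnd ℂ) z - z)⁻¹)), ?_⟩
        have e2 : Polynomial.C (((starRingEnd ℂ) z - z)⁻¹) * (X - Polynomial.C z) +
            -(Polynomial.C (((starRingEnd ℂ) z - z)⁻¹)) * (X - Polynomial.C ((starRingEnd ℂ) z)) =
            Polynomial.C (((starRingEnd ℂ) z - z)⁻¹) *
              (Polynomial.C ((starRingEnd ℂ) z) - Polynomial.C z) := by ring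
        rw [e2, ← map_sub, ← map_mul, inv_mul_cancel₀ (sub_ne_zero.mpr hzz), map_one]
      have hdvd : r ∣ q := by
        rw [← Polynomial.map_dvd_map' (algebraMap ℝ ℂ), hmapr]
        exact IsCoprime.mul_dvd hcop (Polynomial.dvd_iff_isRoot.mpr hz)
          (Polynomial.dvd_iff_isRoot.mpr hconj)
      obtain ⟨s, hs⟩ := hdvd
      have hrmon : r.Monic := by
        have hrw : r = X^2 + (-(Polynomial.C (2*a)*X) + Polynomial.C (a*a+b*b)) := by
          rw [hr_def]; ring
        rw [hrw]
        apply Polynomial.monic_X_pow_add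
        apply lt_of_le_of_lt _ (show (1 : WithBot ℕ) < 2 by norm_num)
        apply le_trans (Polynomial.degree_add_le _ _)
        apply max_le
        · rw [Polynomial.degree_neg]
          apply le_trans (Polynomial.degree_mul_le _ _)
          calc (Polynomial.C (2*a)).degree + Polynomial.X.degree ≤ 0 + 1 := by
                apply add_le_add Polynomial.degree_C_le
                rw [Polynomial.degree_X]
            _ ≤ 1 := by norm_num
        · exact le_trans Polynomial.degree_C_le (by norm_num)
      have hrne : r ≠ 0 := hrmon.ne_zero
      have hrdeg : r.natDegree = 2 := by
        have hrw : r = X^2 + (-(Polynomial.C (2*a)*X) + Polynomial.C (a*a+b*b)) := by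
          rw [hr_def]; ring
        rw [hrw]
        compute_degree!
      have hsmon : s.Monic := hrmon.of_mul_monic_left (hs ▸ hmon)
      have hsne : s ≠ 0 := hsmon.ne_zero
      have hdq : q.natDegree = 2 + s.natDegree := by
        rw [hs, Polynomial.natDegree_mul hrne hsne, hrdeg]
      have hsroots : ∀ w : ℂ, (s.map (algebraMap ℝ ℂ)).IsRoot w → w.re ≠ c := by
        intro w hw
        apply hroots
        rw [hs, Polynomial.map_mul]
        simp only [Polynomial.IsRoot, Polynomial.eval_mul] at hw ⊢
        rw [hw, mul_zero]
      obtain ⟨sp, sm, hspm, hsmm, hfac, hsp, hsm⟩ :=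
        IH (n-2) (by omega) s hsmon (by omega) hsroots
      have hrroot : ∀ w : ℂ, (r.map (algebraMap ℝ ℂ)).IsRoot w → w.re = a := by
        intro w hw
        rw [hmapr] at hw
        simp only [Polynomial.IsRoot, Polynomial.eval_mul, Polynomial.eval_sub,
          Polynomial.eval_X, Polynomial.eval_C, mul_eq_zero, sub_eq_zero] at hw
        rcases hw with rfl | rfl
        · rfl
        · simp [Complex.conj_re]; rfl
      have hane : a ≠ c := by
        have := hroots z hz
        rwa [← ha_def] at this
      rcases lt_or_gt_of_ne hane with hlt | hgt
      · refine ⟨r * sp, sm, hrmon.mul hspm, hsmm, ?_, ?_, hsm⟩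
        · rw [hs, hfac]; ring
        · intro w hw
          rw [Polynomial.map_mul] at hw
          simp only [Polynomial.IsRoot, Polynomial.eval_mul, mul_eq_zero] at hw
          rcases hw with hw | hw
          · rw [hrroot w hw]; exact hlt
          · exact hsp w hw
      · refine ⟨sp, r * sm, hspm, hrmon.mul hsmm, ?_, hsp, ?_⟩
        · rw [hs, hfac]; ring
        · intro w hw
          rw [Polynomial.map_mul] at hw
          simp only [Polynomial.IsRoot, Polynomial.eval_mul, mul_eq_zero] at hw
          rcases hw with hw | hw
          · rw [hrroot w hw]; exact hgt
          · exact hsm w hw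

lemma coprime_of_sep {p q : ℝ[X]} (hp : p ≠ 0) (hq : q ≠ 0) (c : ℝ)
    (hP : ∀ z : ℂ, (p.map (algebraMap ℝ ℂ)).IsRoot z → z.re < c)
    (hQ : ∀ z : ℂ, (q.map (algebraMap ℝ ℂ)).IsRoot z → c < z.re) : IsCoprime p q := by
  classical
  rw [← Polynomial.isCoprime_map (algebraMap ℝ ℂ)]
  by_contra hnc
  set d := EuclideanDomain.gcd (p.map (algebraMap ℝ ℂ)) (q.map (algebraMap ℝ ℂ)) with hd
  have hdnu : ¬IsUnit d := fun hu => hnc (EuclideanDomain.gcd_isUnit_iff.mp hu)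
  have hpm : p.map (algebraMap ℝ ℂ) ≠ 0 := by
    simpa using hp
  have hdne : d ≠ 0 := by
    intro h0
    exact hpm (EuclideanDomain.gcd_eq_zero_iff.mp (hd ▸ h0)).1
  have hddeg : 0 < d.degree := Polynomial.degree_pos_of_ne_zero_of_nonunit hdne hdnu
  obtain ⟨z, hzr⟩ := Complex.exists_root hddeg
  have h1 : (p.map (algebraMap ℝ ℂ)).IsRoot z := by
    obtain ⟨e, he⟩ := EuclideanDomain.gcd_dvd_left (p.map (algebraMap ℝ ℂ))
      (q.map (algebraMap ℝ ℂ))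
    rw [Polynomial.IsRoot, he, Polynomial.eval_mul]
    rw [Polynomial.IsRoot] at hzr
    rw [← hd, hzr, zero_mul]
  have h2 : (q.map (algebraMap ℝ ℂ)).IsRoot z := by
    obtain ⟨e, he⟩ := EuclideanDomain.gcd_dvd_right (p.map (algebraMap ℝ ℂ))
      (q.map (algebraMap ℝ ℂ))
    rw [Polynomial.IsRoot, he, Polynomial.eval_mul]
    rw [Polynomial.IsRoot] at hzr
    rw [← hd, hzr, zero_mul]
  exact absurd (hP z h1) (not_lt.mpr (hQ z h2).le)

lemma exists_upper {S : Set ℝ} (hS : S.Finite) {c : ℝ} (h : ∀ x ∈ S, x < c) :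
    ∃ μ₀, μ₀ < c ∧ ∀ x ∈ S, x ≤ μ₀ := by
  classical
  set F := insert (c-1) hS.toFinset with hF
  have hne : F.Nonempty := ⟨c-1, Finset.mem_insert_self _ _⟩
  refine ⟨F.max' hne, ?_, ?_⟩
  · rw [Finset.max'_lt_iff]
    intro y hy
    rcases Finset.mem_insert.mp hy with rfl | hy'
    · linarith
    · exact h y (hS.mem_toFinset.mp hy')
  · intro x hx
    exact F.le_max' x (Finset.mem_insert_of_mem (hS.mem_toFinset.mpr hx))

lemma absorb (n : ℕ) {ε : ℝ} (hε : 0 < ε) :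
    ∃ D : ℝ, 0 < D ∧ ∀ t : ℝ, 0 ≤ t → (1+t)^n ≤ D * Real.exp (ε*t) := by
  rcases Nat.eq_zero_or_pos n with rfl | hn
  · exact ⟨1, one_pos, fun t ht => by
      simp [Real.exp_nonneg]
      nlinarith [Real.exp_pos (ε*t), Real.add_one_le_exp (ε*t)]⟩
  · set M : ℝ := max 1 ((n:ℝ)/ε) with hM
    have hM1 : (1:ℝ) ≤ M := le_max_left _ _
    have hMn : (n:ℝ)/ε ≤ M := le_max_right _ _
    have hMpos : 0 < M := lt_of_lt_of_le one_pos hM1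
    refine ⟨M^n, by positivity, ?_⟩
    intro t ht
    have hnpos : (0:ℝ) < n := by exact_mod_cast hn
    have h1 : 1 + t ≤ M * (1 + ε*t/n) := by
      have h2 : 1 ≤ M * ε / n * 1 := by
        rw [mul_one]
        rw [div_le_iff₀ hε] at hMn
        rw [le_div_iff₀ hnpos]
        nlinarith
      have h3 : M * (1 + ε*t/n) = M + (M * ε / n) * t := by field_simp
      nlinarith [mul_one M]
    have h2 : (1:ℝ) + ε*t/n ≤ Real.exp (ε*t/n) := by
      have := Real.add_one_le_exp (ε*t/n)
      linarith
    have h3 : 1 + t ≤ M * Real.exp (ε*t/n) := by nlinarith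
    calc (1+t)^n ≤ (M * Real.exp (ε*t/n))^n := by
          apply pow_le_pow_left₀ (by linarith) h3
      _ = M^n * (Real.exp (ε*t/n))^n := mul_pow _ _ _
      _ = M^n * Real.exp (ε*t) := by
          rw [← Real.exp_nat_mul]
          congr 1
          field_simp
  
lemma side (f : V →L[ℝ] V) (q : ℝ[X]) (hq : q ≠ 0) (c : ℝ)
    (hroots : ∀ z : ℂ, (q.map (algebraMap ℝ ℂ)).IsRoot z → z.re < c) :
    ∃ C μ : ℝ, 0 < C ∧ μ < c ∧ ∀ x ∈ LinearMap.ker (Polynomial.aeval (f : V →ₗ[ℝ] V) q),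
      ∀ t : ℝ, 0 ≤ t → ‖E f t x‖ ≤ C * Real.exp (μ*t) * ‖x‖ := by
  have hmapne : q.map (algebraMap ℝ ℂ) ≠ 0 := by simpa using hq
  have hfin : (Complex.re '' { z : ℂ | (q.map (algebraMap ℝ ℂ)).IsRoot z }).Finite :=
    (Polynomial.finite_setOf_isRoot hmapne).image _
  have hall : ∀ x ∈ Complex.re '' { z : ℂ | (q.map (algebraMap ℝ ℂ)).IsRoot z }, x < c := by
    rintro x ⟨z, hz, rfl⟩
    exact hroots z hz
  obtain ⟨μ₀, hμ₀c, hμ₀⟩ := exists_upper hfin hall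
  obtain ⟨C₁, hC₁, hkey⟩ := key f μ₀ q.natDegree q hq le_rfl
    (fun z hz => hμ₀ z.re ⟨z, hz, rfl⟩)
  have hεpos : 0 < (c - μ₀)/2 := by linarith
  obtain ⟨D, hD, habs⟩ := absorb q.natDegree hεpos
  refine ⟨C₁ * D, μ₀ + (c - μ₀)/2, by positivity, by linarith, ?_⟩
  intro x hx t ht
  calc ‖E f t x‖ ≤ C₁ * (1+t)^q.natDegree * Real.exp (μ₀*t) * ‖x‖ := hkey x hx t ht
    _ ≤ C₁ * (D * Real.exp ((c - μ₀)/2*t)) * Real.exp (μ₀*t) * ‖x‖ := by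
        gcongr
        exact habs t ht
    _ = (C₁ * D) * (Real.exp ((c - μ₀)/2*t) * Real.exp (μ₀*t)) * ‖x‖ := by ring
    _ = (C₁ * D) * Real.exp ((μ₀ + (c - μ₀)/2)*t) * ‖x‖ := by
        rw [← Real.exp_add]; ring_nf

end Stmt16Aux



/-- Let `G` be a Lie group with left-invariant metric, `ξ` a left-invariant
unit field with `h = tr ad_ξ`, so that the flow `φ_t` has Jacobian `e^{ht}` and acts on
`k`-forms transverse to `ξ` through `exp(t A)` with `A = Λ^k ad_ξ^⊤` acting on the
finite-dimensional space `V = Λ^k ξ^⊥`. If `h/p` is not the real part of any eigenvalue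
of `A`, then `V` splits into two complementary `A`-invariant subspaces (sums of
characteristic subspaces with `h − p·Re(w) > 0`, resp. `< 0`) on which, for some
`C, η > 0`, one has `‖exp(tA) x‖^p ≤ C e^{−ηt} Jac(φ_t) ‖x‖^p` for `t ≥ 0` on the plus
subspace, and the analogous estimate for `φ_{−t}` on the minus subspace; i.e. `ξ` is
`(k,p)`-Anosov. -/
theorem stmt16 (V : Type*) [NormedAddCommGroup V] [NormedSpace ℝ V]
    [FiniteDimensional ℝ V]
    (A : V →L[ℝ] V) (h p : ℝ) (hp : 1 ≤ p)
    (hspec : ∀ z : ℂ,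
      (Polynomial.map (algebraMap ℝ ℂ) (LinearMap.charpoly (A : V →ₗ[ℝ] V))).IsRoot z →
      z.re ≠ h / p) :
    ∃ (Vplus Vminus : Submodule ℝ V) (C η : ℝ), 0 < C ∧ 0 < η ∧
      IsCompl Vplus Vminus ∧
      (∀ x ∈ Vplus, A x ∈ Vplus) ∧ (∀ x ∈ Vminus, A x ∈ Vminus) ∧
      (∀ x ∈ Vplus, ∀ t : ℝ, 0 ≤ t →
        ‖NormedSpace.exp (t • A) x‖ ^ p ≤
          C * Real.exp (-η * t) * Real.exp (h * t) * ‖x‖ ^ p) ∧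
      (∀ x ∈ Vminus, ∀ t : ℝ, 0 ≤ t →
        ‖NormedSpace.exp (-t • A) x‖ ^ p ≤
          C * Real.exp (-η * t) * Real.exp (-h * t) * ‖x‖ ^ p) := by
  classical
  have hp0 : (0:ℝ) < p := lt_of_lt_of_le one_pos hp
  set c : ℝ := h / p with hc
  have hpc : p * c = h := by rw [hc]; field_simp
  set χ : Polynomial ℝ := LinearMap.charpoly ((A : V →ₗ[ℝ] V)) with hχ
  have hχmon : χ.Monic := LinearMap.charpoly_monic _
  obtain ⟨qp, qm, hqpm, hqmm, hfac, hqp, hqm⟩ :=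
    Stmt16Aux.split c χ.natDegree χ hχmon le_rfl (fun z hz => hspec z hz)
  obtain ⟨Cp, μp, hCp, hμp, hplus⟩ := Stmt16Aux.side A qp hqpm.ne_zero c hqp
  set qm' : Polynomial ℝ := qm.comp (-Polynomial.X) with hqm'
  have hqm'X : qm'.comp (-Polynomial.X) = qm := by
    rw [hqm', Polynomial.comp_assoc]
    simp [Polynomial.neg_comp, Polynomial.X_comp, Polynomial.comp_X]
  have hqm'ne : qm' ≠ 0 := by
    intro h0
    apply hqmm.ne_zero
    rw [← hqm'X, h0, Polynomial.zero_comp]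
  have haeq : Polynomial.aeval (((-A : V →L[ℝ] V)) : V →ₗ[ℝ] V) qm' =
      Polynomial.aeval ((A : V →ₗ[ℝ] V)) qm := by
    rw [hqm', Polynomial.aeval_comp]
    congr 1
    rw [map_neg, Polynomial.aeval_X, ContinuousLinearMap.coe_neg, neg_neg]
  have hqm'roots : ∀ z : ℂ, (qm'.map (algebraMap ℝ ℂ)).IsRoot z → z.re < -c := by
    intro z hz
    rw [hqm', Polynomial.map_comp] at hz
    have h1 : (qm.map (algebraMap ℝ ℂ)).IsRoot (-z) := by
      simp only [Polynomial.IsRoot, Polynomial.eval_comp, Polynomial.map_neg,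
        Polynomial.map_X, Polynomial.eval_neg, Polynomial.eval_X] at hz ⊢
      exact hz
    have h2 := hqm (-z) h1
    rw [Complex.neg_re] at h2
    linarith
  obtain ⟨Cm, μm, hCm, hμm, hminus⟩ := Stmt16Aux.side (-A) qm' hqm'ne (-c) hqm'roots
  have hcop : IsCoprime qp qm := Stmt16Aux.coprime_of_sep hqpm.ne_zero hqmm.ne_zero c hqp hqm
  set C0 : ℝ := max Cp Cm with hC0def
  have hC0 : 0 < C0 := lt_max_of_lt_left hCp
  set η : ℝ := min (p*(c - μp)) (p*(-c - μm)) with hηdef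
  have hη : 0 < η := by
    apply lt_min
    · apply mul_pos hp0; linarith
    · apply mul_pos hp0; linarith
  refine ⟨LinearMap.ker (Polynomial.aeval ((A : V →ₗ[ℝ] V)) qp),
    LinearMap.ker (Polynomial.aeval ((A : V →ₗ[ℝ] V)) qm),
    C0 ^ p, η, Real.rpow_pos_of_pos hC0 p, hη, ?_, ?_, ?_, ?_, ?_⟩
  · -- IsCompl
    constructor
    · exact Polynomial.disjoint_ker_aeval_of_isCoprime _ hcop
    · rw [codisjoint_iff, Polynomial.sup_ker_aeval_eq_ker_aeval_mul_of_coprime _ hcop, ← hfac]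
      rw [LinearMap.ker_eq_top]
      exact LinearMap.aeval_self_charpoly _
  · -- invariance of Vplus
    intro x hx
    rw [LinearMap.mem_ker] at hx ⊢
    have hcomm : (Polynomial.aeval ((A : V →ₗ[ℝ] V)) qp) ((A : V →ₗ[ℝ] V) x)
        = (A : V →ₗ[ℝ] V) ((Polynomial.aeval ((A : V →ₗ[ℝ] V)) qp) x) := by
      have h1 := (Commute.all qp (Polynomial.X : Polynomial ℝ)).map
        (Polynomial.aeval ((A : V →ₗ[ℝ] V)))
      rw [Polynomial.aeval_X] at h1
      calc (Polynomial.aeval ((A : V →ₗ[ℝ] V)) qp) ((A : V →ₗ[ℝ] V) x)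
          = ((Polynomial.aeval ((A : V →ₗ[ℝ] V)) qp) * (A : V →ₗ[ℝ] V)) x := rfl
        _ = ((A : V →ₗ[ℝ] V) * (Polynomial.aeval ((A : V →ₗ[ℝ] V)) qp)) x := by rw [h1.eq]
        _ = (A : V →ₗ[ℝ] V) ((Polynomial.aeval ((A : V →ₗ[ℝ] V)) qp) x) := rfl
    show (Polynomial.aeval ((A : V →ₗ[ℝ] V)) qp) ((A : V →ₗ[ℝ] V) x) = 0
    rw [hcomm, hx, map_zero]
  · -- invariance of Vminus
    intro x hx
    rw [LinearMap.mem_ker] at hx ⊢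
    have hcomm : (Polynomial.aeval ((A : V →ₗ[ℝ] V)) qm) ((A : V →ₗ[ℝ] V) x)
        = (A : V →ₗ[ℝ] V) ((Polynomial.aeval ((A : V →ₗ[ℝ] V)) qm) x) := by
      have h1 := (Commute.all qm (Polynomial.X : Polynomial ℝ)).map
        (Polynomial.aeval ((A : V →ₗ[ℝ] V)))
      rw [Polynomial.aeval_X] at h1
      calc (Polynomial.aeval ((A : V →ₗ[ℝ] V)) qm) ((A : V →ₗ[ℝ] V) x)
          = ((Polynomial.aeval ((A : V →ₗ[ℝ] V)) qm) * (A : V →ₗ[ℝ] V)) x := rfl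
        _ = ((A : V →ₗ[ℝ] V) * (Polynomial.aeval ((A : V →ₗ[ℝ] V)) qm)) x := by rw [h1.eq]
        _ = (A : V →ₗ[ℝ] V) ((Polynomial.aeval ((A : V →ₗ[ℝ] V)) qm) x) := rfl
    show (Polynomial.aeval ((A : V →ₗ[ℝ] V)) qm) ((A : V →ₗ[ℝ] V) x) = 0
    rw [hcomm, hx, map_zero]
  · -- plus estimate
    intro x hx t ht
    have hb : ‖NormedSpace.exp (t • A) x‖ ≤ C0 * Real.exp (μp*t) * ‖x‖ := by
      have h1 := hplus x hx t ht
      have h2 : Cp * Real.exp (μp*t) * ‖x‖ ≤ C0 * Real.exp (μp*t) * ‖x‖ := by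
        gcongr
        exact le_max_left _ _
      exact le_trans h1 h2
    have h3 : ‖NormedSpace.exp (t • A) x‖ ^ p ≤ (C0 * Real.exp (μp*t) * ‖x‖) ^ p :=
      Real.rpow_le_rpow (norm_nonneg _) hb hp0.le
    have h4 : (C0 * Real.exp (μp*t) * ‖x‖) ^ p
        = C0 ^ p * Real.exp (μp*t*p) * ‖x‖ ^ p := by
      rw [Real.mul_rpow (by positivity) (norm_nonneg _),
        Real.mul_rpow hC0.le (Real.exp_nonneg _), ← Real.exp_mul]
    have h5 : Real.exp (μp*t*p) ≤ Real.exp (-η*t) * Real.exp (h*t) := by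
      rw [← Real.exp_add]
      apply Real.exp_le_exp.2
      have h6 : η ≤ p*(c - μp) := min_le_left _ _
      nlinarith
    calc ‖NormedSpace.exp (t • A) x‖ ^ p ≤ C0 ^ p * Real.exp (μp*t*p) * ‖x‖ ^ p := by
          rw [← h4]; exact h3
      _ ≤ C0 ^ p * (Real.exp (-η*t) * Real.exp (h*t)) * ‖x‖ ^ p := by
          gcongr <;> first | exact h5 | positivity
      _ = C0 ^ p * Real.exp (-η*t) * Real.exp (h*t) * ‖x‖ ^ p := by ring
  · -- minus estimate
    intro x hx t ht
    have hx' : x ∈ LinearMap.ker (Polynomial.aeval (((-A : V →L[ℝ] V)) : V →ₗ[ℝ] V) qm') := by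
      rw [LinearMap.mem_ker, haeq]
      rwa [LinearMap.mem_ker] at hx
    have hexpeq : NormedSpace.exp ((-t) • A) = NormedSpace.exp (t • (-A)) := by
      rw [smul_neg, neg_smul]
    have hb : ‖NormedSpace.exp (-t • A) x‖ ≤ C0 * Real.exp (μm*t) * ‖x‖ := by
      have h1 := hminus x hx' t ht
      have h1' : ‖NormedSpace.exp (-t • A) x‖ ≤ Cm * Real.exp (μm*t) * ‖x‖ := by
        rw [hexpeq]
        exact h1
      have h2 : Cm * Real.exp (μm*t) * ‖x‖ ≤ C0 * Real.exp (μm*t) * ‖x‖ := by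
        gcongr
        exact le_max_right _ _
      exact le_trans h1' h2
    have h3 : ‖NormedSpace.exp (-t • A) x‖ ^ p ≤ (C0 * Real.exp (μm*t) * ‖x‖) ^ p :=
      Real.rpow_le_rpow (norm_nonneg _) hb hp0.le
    have h4 : (C0 * Real.exp (μm*t) * ‖x‖) ^ p
        = C0 ^ p * Real.exp (μm*t*p) * ‖x‖ ^ p := by
      rw [Real.mul_rpow (by positivity) (norm_nonneg _),
        Real.mul_rpow hC0.le (Real.exp_nonneg _), ← Real.exp_mul]
    have h5 : Real.exp (μm*t*p) ≤ Real.exp (-η*t) * Real.exp (-h*t) := by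
      rw [← Real.exp_add]
      apply Real.exp_le_exp.2
      have h6 : η ≤ p*(-c - μm) := min_le_right _ _
      nlinarith
    calc ‖NormedSpace.exp (-t • A) x‖ ^ p ≤ C0 ^ p * Real.exp (μm*t*p) * ‖x‖ ^ p := by
          rw [← h4]; exact h3
      _ ≤ C0 ^ p * (Real.exp (-η*t) * Real.exp (-h*t)) * ‖x‖ ^ p := by
          gcongr <;> first | exact h5 | positivity
      _ = C0 ^ p * Real.exp (-η*t) * Real.exp (-h*t) * ‖x‖ ^ p := by ring
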